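/- With the setup of the operator Θ_J on S(V; A), and the representations (π(f)ξ)(x) = ∫ α_{−x}(f(z))ξ(x−z)dz and (π_J(f)ξ)(x) = ∫ α_{Jy−x}(f̂(y)) ξ̂(y) e(x·y) dy on A-valued Schwartz functions ξ, one has the operator identity π_J(f) = π(Θ_J(f)) for every f ∈ S(V; A). -/

import Mathlib

open RealInnerProductSpace MeasureTheory
open FourierTransform

abbrev Vd (d : ℕ) := EuclideanSpace ℝ (Fin d)

/-- `e(x·y) = exp(2πi⟨x,y⟩)`. -/
noncomputable def eBil {d : ℕ} (x y : Vd d) : ℂ :=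
  Complex.exp (2 * Real.pi * Complex.I * ((⟪x, y⟫ : ℝ) : ℂ))

/-- The `A`-valued Fourier transform `f̂(y) = ∫ f(z) e(−z·y) dz`. -/
noncomputable def vFourier {d : ℕ} {A : Type*} [NormedAddCommGroup A] [NormedSpace ℂ A]
    (f : Vd d → A) (y : Vd d) : A :=
  ∫ z : Vd d, Complex.exp (-(2 * Real.pi * Complex.I) * ((⟪z, y⟫ : ℝ) : ℂ)) • f z

/-- `Θ_J(f)(x) = ∫ α_{Jy}(f̂(y)) e(x·y) dy`. -/
noncomputable def ThetaJ {d : ℕ} {A : Type*} [NormedRing A] [NormedAlgebra ℂ A]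
    [CompleteSpace A] (α : Vd d → (A →ₐ[ℂ] A)) (J : Vd d →ₗ[ℝ] Vd d)
    (f : Vd d → A) : Vd d → A :=
  fun x => ∫ y : Vd d, eBil x y • α (J y) (vFourier f y)

section aux
variable {d : ℕ} {A : Type*} [NormedAddCommGroup A] [NormedSpace ℂ A] [CompleteSpace A]

lemma norm_eBil (x y : Vd d) : ‖eBil x y‖ = 1 := by
  have h : (2 * Real.pi * Complex.I * ((⟪x, y⟫ : ℝ) : ℂ))
      = ((2 * Real.pi * ⟪x, y⟫ : ℝ) : ℂ) * Complex.I := by push_cast; ring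
  rw [eBil, h]
  exact Complex.norm_exp_ofReal_mul_I _

lemma vFourier_eq (f : Vd d → A) : vFourier f = 𝓕 f := by
  ext y
  rw [Real.fourier_eq', vFourier]
  congr 1; ext z; congr 2; push_cast; ring

lemma vFourier_schwartz (f : SchwartzMap (Vd d) A) :
    vFourier (⇑f) = ⇑(SchwartzMap.fourierTransformCLM ℂ f) := by
  rw [vFourier_eq]; ext y; rw [SchwartzMap.fourierTransformCLM_apply]; rfl

lemma eBil_continuous : Continuous fun p : Vd d × Vd d => eBil p.1 p.2 := by
  unfold eBil
  exact Complex.continuous_exp.comp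
    (continuous_const.mul (Complex.continuous_ofReal.comp continuous_inner))

end aux

section alg
variable {d : ℕ} {A : Type*} [NormedRing A] [NormedAlgebra ℂ A] [CompleteSpace A]

/-- `α x` as a continuous linear map. -/
noncomputable def αCLM (α : Vd d → (A →ₐ[ℂ] A)) (hiso : ∀ (x : Vd d) (a : A), ‖α x a‖ = ‖a‖)
    (x : Vd d) : A →L[ℂ] A :=
  LinearMap.mkContinuous (α x).toLinearMap 1 (fun a => by simp [hiso x a])

@[simp] lemma αCLM_apply (α : Vd d → (A →ₐ[ℂ] A)) (hiso : ∀ (x : Vd d) (a : A), ‖α x a‖ = ‖a‖)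
    (x : Vd d) (a : A) : αCLM α hiso x a = α x a := rfl

lemma alpha_cont {α : Vd d → (A →ₐ[ℂ] A)}
    (hiso : ∀ (x : Vd d) (a : A), ‖α x a‖ = ‖a‖)
    (hcont : ∀ a : A, Continuous fun x : Vd d => α x a)
    {c : Vd d → Vd d} (hc : Continuous c) {g : Vd d → A} (hg : Continuous g) :
    Continuous fun y => α (c y) (g y) := by
  rw [continuous_iff_continuousAt]
  intro y₀
  have t1 : Filter.Tendsto (fun y => α (c y) (g y - g y₀)) (nhds y₀) (nhds 0) := by
    rw [tendsto_zero_iff_norm_tendsto_zero]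
    simp only [hiso]
    have h0 : Filter.Tendsto (fun y => g y - g y₀) (nhds y₀) (nhds 0) := by
      simpa using (hg.tendsto y₀).sub (tendsto_const_nhds (x := g y₀))
    simpa using h0.norm
  have t2 : Filter.Tendsto (fun y => α (c y) (g y₀)) (nhds y₀) (nhds (α (c y₀) (g y₀))) :=
    ((hcont (g y₀)).comp hc).tendsto y₀
  have : Filter.Tendsto (fun y => α (c y) (g y - g y₀) + α (c y) (g y₀)) (nhds y₀)
      (nhds (α (c y₀) (g y₀))) := by simpa using t1.add t2
  have heq : (fun y => α (c y) (g y - g y₀) + α (c y) (g y₀)) = fun y => α (c y) (g y) := by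
    ext y; rw [← map_add]; congr 1; abel
  rw [heq] at this
  exact this

end alg

theorem stmt11 (d : ℕ) {A : Type*} [NormedRing A] [NormedAlgebra ℂ A] [CompleteSpace A]
    (α : Vd d → (A →ₐ[ℂ] A))
    (hα0 : α 0 = AlgHom.id ℂ A)
    (hαadd : ∀ x y : Vd d, α (x + y) = (α x).comp (α y))
    (hiso : ∀ (x : Vd d) (a : A), ‖α x a‖ = ‖a‖)
    (hcont : ∀ a : A, Continuous fun x : Vd d => α x a)
    (J : Vd d →ₗ[ℝ] Vd d) (hJ : ∀ x y : Vd d, ⟪J x, y⟫ = -⟪x, J y⟫) :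
    -- `π_J(f) = π(Θ_J(f))`:
    -- `(π(Θ_J f)ξ)(x) = ∫ α_{−x}((Θ_J f)(z)) ξ(x−z) dz` equals
    -- `(π_J(f)ξ)(x) = ∫ α_{Jy−x}(f̂(y)) ξ̂(y) e(x·y) dy`
    ∀ (f ξ : SchwartzMap (Vd d) A) (x : Vd d),
      (∫ z : Vd d, α (-x) (ThetaJ α J (⇑f) z) * ξ (x - z))
        = ∫ y : Vd d, eBil x y • (α (J y - x) (vFourier (⇑f) y) * vFourier (⇑ξ) y) := by
  intro f ξ x
  have hJc : Continuous J := J.continuous_of_finiteDimensional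
  set F : Vd d → A := vFourier (⇑f) with hFdef
  have hFs : F = ⇑(SchwartzMap.fourierTransformCLM ℂ f) := vFourier_schwartz f
  have hFcont : Continuous F := by rw [hFs]; exact (SchwartzMap.fourierTransformCLM ℂ f).continuous
  have hFint : Integrable F := by rw [hFs]; exact (SchwartzMap.fourierTransformCLM ℂ f).integrable
  set a : Vd d → A := fun y => α (J y - x) (F y) with hadef
  have hacont : Continuous a := alpha_cont hiso hcont (hJc.sub continuous_const) hFcont
  have hξcont : Continuous fun z => (ξ : Vd d → A) (x - z) :=
    ξ.continuous.comp (continuous_const.sub continuous_id)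
  have hξint : Integrable fun z => (ξ : Vd d → A) (x - z) :=
    (integrable_comp_sub_left (⇑ξ) x).2 ξ.integrable
  -- integrability of the inner integrand of ThetaJ
  have hint1 : ∀ z : Vd d, Integrable (fun y => eBil z y • α (J y) (F y)) := by
    intro z
    have hc : Continuous fun y => eBil z y • α (J y) (F y) :=
      ((eBil_continuous.comp (continuous_const.prodMk continuous_id)).smul
        (alpha_cont hiso hcont hJc hFcont))
    refine hFint.norm.mono' hc.aestronglyMeasurable (Filter.Eventually.of_forall fun y => ?_)
    rw [norm_smul, norm_eBil, hiso, one_mul]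
  have hint2 : ∀ z : Vd d, Integrable (fun y => eBil z y • a y) := by
    intro z
    have hc : Continuous fun y => eBil z y • a y :=
      ((eBil_continuous.comp (continuous_const.prodMk continuous_id)).smul hacont)
    refine hFint.norm.mono' hc.aestronglyMeasurable (Filter.Eventually.of_forall fun y => ?_)
    rw [norm_smul, norm_eBil, hadef]
    simp only [hiso, one_mul, le_refl]
  -- Step 1
  have step1 : ∀ z : Vd d, α (-x) (ThetaJ α J (⇑f) z) = ∫ y, eBil z y • a y := by
    intro z
    have hcomm := (αCLM α hiso (-x)).integral_comp_comm (hint1 z)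
    have : α (-x) (ThetaJ α J (⇑f) z) = ∫ y, αCLM α hiso (-x) (eBil z y • α (J y) (F y)) := by
      rw [hcomm]; rfl
    rw [this]
    congr 1
    ext y
    rw [αCLM_apply, map_smul]
    congr 1
    have h1 : α (J y - x) = (α (-x)).comp (α (J y)) := by
      rw [← hαadd]; congr 1; abel
    rw [hadef]
    show α (-x) (α (J y) (F y)) = α (J y - x) (F y)
    rw [h1]; rfl
  -- Step 2: pull the right multiplication inside
  have step2 : ∀ z : Vd d, (∫ y, eBil z y • a y) * ξ (x - z)
      = ∫ y, (eBil z y • a y) * ξ (x - z) := by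
    intro z
    have := ((ContinuousLinearMap.mul ℂ A).flip (ξ (x - z))).integral_comp_comm (hint2 z)
    simpa using this.symm
  -- Fubini
  have hprod : Integrable (Function.uncurry fun z y => (eBil z y • a y) * ξ (x - z))
      (volume.prod volume) := by
    have hc : Continuous fun p : Vd d × Vd d => (eBil p.1 p.2 • a p.2) * ξ (x - p.1) := by
      exact ((eBil_continuous.smul (hacont.comp continuous_snd)).mul
        (hξcont.comp continuous_fst))
    have hbd : Integrable (fun p : Vd d × Vd d => ‖F p.2‖ * ‖(ξ : Vd d → A) (x - p.1)‖)
        (volume.prod volume) := by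
      have := Integrable.mul_prod (hξint.norm) (hFint.norm)
      have heq : (fun p : Vd d × Vd d => ‖F p.2‖ * ‖(ξ : Vd d → A) (x - p.1)‖)
          = fun p : Vd d × Vd d => ‖(ξ : Vd d → A) (x - p.1)‖ * ‖F p.2‖ := by
        ext p; ring
      rw [heq]; exact this
    refine hbd.mono' hc.aestronglyMeasurable (Filter.Eventually.of_forall fun p => ?_)
    calc ‖(eBil p.1 p.2 • a p.2) * ξ (x - p.1)‖
        ≤ ‖eBil p.1 p.2 • a p.2‖ * ‖(ξ : Vd d → A) (x - p.1)‖ := norm_mul_le _ _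
      _ = ‖F p.2‖ * ‖(ξ : Vd d → A) (x - p.1)‖ := by
          rw [norm_smul, norm_eBil, one_mul, hadef]; simp only [hiso]
  have fub : (∫ z, ∫ y, (eBil z y • a y) * ξ (x - z))
      = ∫ y, ∫ z, (eBil z y • a y) * ξ (x - z) :=
    integral_integral_swap hprod
  -- Step 4: inner integral over z
  have key : ∀ y : Vd d, (∫ z, eBil z y • (ξ : Vd d → A) (x - z))
      = eBil x y • vFourier (⇑ξ) y := by
    intro y
    have hsub := integral_sub_left_eq_self
      (fun w => eBil (x - w) y • (ξ : Vd d → A) w) (volume) x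
    have h1 : (∫ z, eBil z y • (ξ : Vd d → A) (x - z))
        = ∫ z, eBil (x - z) y • (ξ : Vd d → A) z := by
      rw [← hsub]
      congr 1; ext z; rw [sub_sub_cancel]
    rw [h1]
    have h2 : ∀ z : Vd d, eBil (x - z) y
        = eBil x y * Complex.exp (-(2 * Real.pi * Complex.I) * ((⟪z, y⟫ : ℝ) : ℂ)) := by
      intro z
      rw [eBil, eBil, ← Complex.exp_add]
      congr 1
      rw [inner_sub_left]
      push_cast
      ring
    calc (∫ z, eBil (x - z) y • (ξ : Vd d → A) z)
        = ∫ z, eBil x y • (Complex.exp (-(2 * Real.pi * Complex.I) * ((⟪z, y⟫ : ℝ) : ℂ))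
            • (ξ : Vd d → A) z) := by
          congr 1; ext z; rw [h2 z, mul_smul]
      _ = eBil x y • vFourier (⇑ξ) y := by rw [integral_smul]; rfl
  have step4 : ∀ y : Vd d, (∫ z, (eBil z y • a y) * ξ (x - z))
      = eBil x y • (a y * vFourier (⇑ξ) y) := by
    intro y
    have hintz : Integrable fun z => eBil z y • (ξ : Vd d → A) (x - z) := by
      have hc : Continuous fun z => eBil z y • (ξ : Vd d → A) (x - z) :=
        (eBil_continuous.comp (continuous_id.prodMk continuous_const)).smul hξcont
      refine hξint.norm.mono' hc.aestronglyMeasurable (Filter.Eventually.of_forall fun z => ?_)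
      rw [norm_smul, norm_eBil, one_mul]
    have e1 : ∀ z : Vd d, (eBil z y • a y) * ξ (x - z)
        = ContinuousLinearMap.mul ℂ A (a y) (eBil z y • (ξ : Vd d → A) (x - z)) := by
      intro z
      simp only [ContinuousLinearMap.mul_apply']
      rw [smul_mul_assoc, mul_smul_comm]
    calc (∫ z, (eBil z y • a y) * ξ (x - z))
        = ∫ z, ContinuousLinearMap.mul ℂ A (a y) (eBil z y • (ξ : Vd d → A) (x - z)) := by
          congr 1; ext z; rw [e1 z]
      _ = a y * ∫ z, eBil z y • (ξ : Vd d → A) (x - z) := by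
          rw [(ContinuousLinearMap.mul ℂ A (a y)).integral_comp_comm hintz]; rfl
      _ = a y * (eBil x y • vFourier (⇑ξ) y) := by rw [key y]
      _ = eBil x y • (a y * vFourier (⇑ξ) y) := mul_smul_comm _ _ _
  calc (∫ z : Vd d, α (-x) (ThetaJ α J (⇑f) z) * ξ (x - z))
      = ∫ z, (∫ y, eBil z y • a y) * ξ (x - z) := by
        congr 1; ext z; rw [step1 z]
    _ = ∫ z, ∫ y, (eBil z y • a y) * ξ (x - z) := by
        congr 1; ext z; rw [step2 z]
    _ = ∫ y, ∫ z, (eBil z y • a y) * ξ (x - z) := fub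
    _ = ∫ y, eBil x y • (a y * vFourier (⇑ξ) y) := by
        congr 1; ext y; rw [step4 y]
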